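/- For every even integer m ≥ 2 and every integer n ≥ 1, Σ_{k=1}^{m} (−1)^{k+1}·Q_n(k, m−k) = G_{n-1}(m+1, 0). -/

import Mathlib

/-- A Dyck path: a finite sequence of ±1 steps with all partial sums nonnegative
and total sum zero. -/
def IsDyckPath (p : List ℤ) : Prop :=
  (∀ s ∈ p, s = 1 ∨ s = -1) ∧ (∀ k, 0 ≤ (p.take k).sum) ∧ p.sum = 0

/-- The height of a path: the maximum of its partial sums (0 for the empty path). -/
def pathHeight (p : List ℤ) : ℕ :=
  Finset.sup (Finset.range (p.length + 1)) (fun k => ((p.take k).sum).toNat)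

/-- Super-Catalan numbers `T(m,n) = (2m)!(2n)!/(2·m!·n!·(m+n)!)`, as a rational number. -/
def superCatalan (m n : ℕ) : ℚ :=
  ((2 * m).factorial * (2 * n).factorial : ℚ) /
    (2 * m.factorial * n.factorial * (m + n).factorial)

/-- `G n m k`: the number of `m`-tuples of Dyck paths of total length `2n` all of whose
pairwise height differences are at most `k` (this is `0` when `n < 0`). -/
noncomputable def G (n : ℤ) (m k : ℕ) : ℕ :=
  Nat.card {p : Fin m → List ℤ //
    (∀ i, IsDyckPath (p i)) ∧
    (∑ i, ((p i).length : ℤ)) = 2 * n ∧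
    ∀ i j, |(pathHeight (p i) : ℤ) - (pathHeight (p j) : ℤ)| ≤ (k : ℤ)}

/-- The path-height function `P n [a₁,…,aₘ]`: the number of `m`-tuples of Dyck paths
of total length `2n` whose `i`-th path has height `aᵢ`. -/
noncomputable def P (n : ℤ) (a : List ℕ) : ℕ :=
  Nat.card {p : Fin a.length → List ℤ //
    (∀ i, IsDyckPath (p i)) ∧
    (∑ i, ((p i).length : ℤ)) = 2 * n ∧
    ∀ i, pathHeight (p i) = a.get i}

/-- `Qx n x [a₀,…,a_k]` is `P n` evaluated at `a₀` copies of `x`, `a₁` copies of `x+1`, …,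
`a_k` copies of `x+k`. -/
noncomputable def Qx (n : ℤ) (x : ℕ) (a : List ℕ) : ℕ :=
  P n (a.zipIdx.flatMap fun q => List.replicate q.1 (x + q.2))

/-- The grouped path-height function `Q n a = ∑_{x=0}^∞ Qx n x a`. Whenever some entry
of `a` is positive (as in every application below) all terms with `x > n` vanish, since
a Dyck path of height at least `x` has length at least `2x`; so the infinite sum equals
its truncation at `x = n`. -/
noncomputable def Q (n : ℤ) (a : List ℕ) : ℕ :=
  ∑ x ∈ Finset.range (n.toNat + 1), Qx n x a

namespace DyckAux

lemma sum_le_length (l : List ℤ) (h : ∀ s ∈ l, s ≤ 1) : l.sum ≤ l.length := by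
  induction l with
  | nil => simp
  | cons a t ih =>
      have h1 := h a (by simp)
      have h2 := ih (fun s hs => h s (by simp [hs]))
      simp only [List.sum_cons, List.length_cons]
      push_cast
      omega

lemma neg_length_le_sum (l : List ℤ) (h : ∀ s ∈ l, -1 ≤ s) : -(l.length : ℤ) ≤ l.sum := by
  induction l with
  | nil => simp
  | cons a t ih =>
      have h1 := h a (by simp)
      have h2 := ih (fun s hs => h s (by simp [hs]))
      simp only [List.sum_cons, List.length_cons]
      push_cast
      omega

lemma pathHeight_nil : pathHeight [] = 0 := rfl

lemma le_pathHeight (l : List ℤ) {k : ℕ} (h : k < l.length + 1) :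
    ((l.take k).sum).toNat ≤ pathHeight l := by
  unfold pathHeight
  exact Finset.le_sup (f := fun k => ((l.take k).sum).toNat) (Finset.mem_range.mpr h)

lemma toNat_take_le (l : List ℤ) (k : ℕ) : ((l.take k).sum).toNat ≤ pathHeight l := by
  rcases le_or_gt k l.length with h | h
  · exact le_pathHeight l (by omega)
  · rw [List.take_of_length_le h.le]
    calc (l.sum).toNat = ((l.take l.length).sum).toNat := by rw [List.take_length]
    _ ≤ _ := le_pathHeight l (by omega)

lemma sum_take_le_pathHeight (l : List ℤ) (k : ℕ) :
    (l.take k).sum ≤ (pathHeight l : ℤ) := by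
  refine le_trans (Int.self_le_toNat _) ?_
  exact_mod_cast toNat_take_le l k

lemma exists_take_eq (l : List ℤ) : ∃ k ≤ l.length, ((l.take k).sum).toNat = pathHeight l := by
  obtain ⟨k, hk, he⟩ := Finset.exists_mem_eq_sup (Finset.range (l.length + 1)) (by simp)
    (fun k => ((l.take k).sum).toNat)
  exact ⟨k, by simpa using Nat.lt_succ_iff.mp (Finset.mem_range.mp hk), he.symm⟩

lemma pathHeight_append (a b : List ℤ) (ha : a.sum = 0) :
    pathHeight (a ++ b) = max (pathHeight a) (pathHeight b) := by
  apply le_antisymm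
  · apply Finset.sup_le
    intro k _
    rw [List.take_append, List.sum_append]
    rcases le_or_gt k a.length with h | h
    · rw [Nat.sub_eq_zero_of_le h]
      simp only [List.take_zero, List.sum_nil, add_zero]
      exact le_trans (toNat_take_le a k) (le_max_left _ _)
    · rw [List.take_of_length_le h.le, ha, zero_add]
      exact le_trans (toNat_take_le b _) (le_max_right _ _)
  · apply max_le
    · obtain ⟨k, hk, he⟩ := exists_take_eq a
      rw [← he]
      have : (a.take k).sum = ((a ++ b).take k).sum := by
        rw [List.take_append, Nat.sub_eq_zero_of_le hk]
        simp
      rw [this]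
      exact toNat_take_le _ _
    · obtain ⟨k, hk, he⟩ := exists_take_eq b
      rw [← he]
      have h1 : a.length ≤ a.length + k := Nat.le_add_right _ _
      have : (b.take k).sum = ((a ++ b).take (a.length + k)).sum := by
        rw [List.take_append, List.take_of_length_le h1,
          Nat.add_sub_cancel_left, List.sum_append, ha, zero_add]
      rw [this]
      exact toNat_take_le _ _

lemma pathHeight_neg_one : pathHeight [(-1 : ℤ)] = 0 := rfl

lemma pathHeight_one_cons (a : List ℤ) (ha2 : ∀ k, 0 ≤ (a.take k).sum) (ha3 : a.sum = 0) :
    pathHeight (1 :: (a ++ [-1])) = pathHeight a + 1 := by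
  have hC : pathHeight (a ++ [-1]) = pathHeight a := by
    rw [pathHeight_append a [-1] ha3, pathHeight_neg_one]
    simp
  apply le_antisymm
  · apply Finset.sup_le
    intro k _
    rw [Int.toNat_le]
    match k with
    | 0 =>
        simp only [List.take_zero, List.sum_nil]
        positivity
    | j + 1 =>
        rw [List.take_succ_cons, List.sum_cons]
        have := sum_take_le_pathHeight (a ++ [-1]) j
        rw [hC] at this
        push_cast
        omega
  · obtain ⟨k, hk, he⟩ := exists_take_eq a
    have hs : (a.take k).sum = (pathHeight a : ℤ) := by
      have h0 := ha2 k
      omega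
    have hval : ((1 :: (a ++ [-1])).take (k + 1)).sum = (pathHeight a : ℤ) + 1 := by
      rw [List.take_succ_cons, List.sum_cons, List.take_append,
        Nat.sub_eq_zero_of_le hk]
      simp [hs]
      ring
    calc pathHeight a + 1 = (((1 :: (a ++ [-1])).take (k + 1)).sum).toNat := by rw [hval]; omega
    _ ≤ _ := toNat_take_le _ _

lemma one_le_pathHeight (l : List ℤ) (hl : IsDyckPath l) (hne : l ≠ []) :
    1 ≤ pathHeight l := by
  obtain ⟨s, t, rfl⟩ := List.exists_cons_of_ne_nil hne
  have h1 := hl.2.1 1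
  have hs : s = 1 := by
    rcases hl.1 s (by simp) with h | h
    · exact h
    · simp [h] at h1
  have h2 : ((s :: t).take 1).sum = 1 := by simp [hs]
  have h3 := toNat_take_le (s :: t) 1
  rw [h2] at h3
  simpa using h3

lemma pathHeight_eq_zero (l : List ℤ) (hl : IsDyckPath l) (h : pathHeight l = 0) : l = [] := by
  by_contra hne
  have := one_le_pathHeight l hl hne
  omega

lemma two_mul_pathHeight_le (l : List ℤ) (hl : IsDyckPath l) :
    2 * pathHeight l ≤ l.length := by
  obtain ⟨k, hk, he⟩ := exists_take_eq l
  have h0 := hl.2.1 k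
  have hs : (l.take k).sum = (pathHeight l : ℤ) := by omega
  have h1 : (l.take k).sum ≤ ((l.take k).length : ℤ) :=
    sum_le_length _ (fun s hs => by
      rcases hl.1 s (List.mem_of_mem_take hs) with h | h <;> omega)
  have h2 : -(((l.drop k).length : ℤ)) ≤ (l.drop k).sum :=
    neg_length_le_sum _ (fun s hs => by
      rcases hl.1 s (List.mem_of_mem_drop hs) with h | h <;> omega)
  have h3 : (l.take k).sum + (l.drop k).sum = 0 := by
    rw [← List.sum_append, List.take_append_drop]
    exact hl.2.2
  have h4 : (l.take k).length = k := by simp; omega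
  have h5 : (l.drop k).length = l.length - k := by simp
  rw [hs] at h1 h3
  rw [h4] at h1
  rw [h5] at h2
  omega

end DyckAux

open DyckStep in
def stepv : DyckStep → ℤ
  | U => 1
  | D => -1

open DyckStep in
def stepOf (z : ℤ) : DyckStep := if z = 1 then U else D

namespace DyckAux
open DyckStep

lemma stepv_mem (s : DyckStep) : stepv s = 1 ∨ stepv s = -1 := by cases s <;> simp [stepv]

lemma stepOf_stepv (s : DyckStep) : stepOf (stepv s) = s := by cases s <;> simp [stepv, stepOf]

lemma stepv_stepOf {z : ℤ} (h : z = 1 ∨ z = -1) : stepv (stepOf z) = z := by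
  rcases h with h | h <;> simp [h, stepv, stepOf]

lemma map_stepv_map_stepOf (l : List ℤ) (h : ∀ s ∈ l, s = 1 ∨ s = -1) :
    (l.map stepOf).map stepv = l := by
  induction l with
  | nil => rfl
  | cons a t ih =>
      simp only [List.map_cons]
      rw [stepv_stepOf (h a (by simp)), ih (fun s hs => h s (by simp [hs]))]

lemma map_stepOf_map_stepv (L : List DyckStep) : (L.map stepv).map stepOf = L := by
  induction L with
  | nil => rfl
  | cons a t ih => simp [stepOf_stepv, ih]

lemma sum_map_stepv (L : List DyckStep) :
    (L.map stepv).sum = (L.count U : ℤ) - (L.count D : ℤ) := by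
  induction L with
  | nil => simp
  | cons s t ih =>
      cases s <;> simp [stepv, ih, List.count_cons] <;> push_cast <;> ring

lemma length_eq_count_add_count (L : List DyckStep) :
    L.length = L.count U + L.count D := by
  induction L with
  | nil => simp
  | cons s t ih => cases s <;> simp [ih, List.count_cons] <;> omega

/-- The path of a Dyck word. -/
def wpath (w : DyckWord) : List ℤ := w.toList.map stepv

lemma wpath_isDyck (w : DyckWord) : IsDyckPath (wpath w) := by
  refine ⟨fun s hs => ?_, fun k => ?_, ?_⟩
  · obtain ⟨t, _, rfl⟩ := List.mem_map.mp hs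
    exact stepv_mem t
  · rw [wpath, ← List.map_take, sum_map_stepv]
    have := w.count_D_le_count_U k
    omega
  · rw [wpath, sum_map_stepv, w.count_U_eq_count_D]
    ring

lemma length_wpath (w : DyckWord) : (wpath w).length = 2 * w.semilength := by
  rw [wpath, List.length_map, DyckWord.two_mul_semilength_eq_length]

/-- The Dyck word of a Dyck path. -/
def pword (l : List ℤ) (hl : IsDyckPath l) : DyckWord where
  toList := l.map stepOf
  count_U_eq_count_D := by
    have h := sum_map_stepv (l.map stepOf)
    rw [map_stepv_map_stepOf l hl.1, hl.2.2] at h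
    omega
  count_D_le_count_U i := by
    rw [← List.map_take]
    have h := sum_map_stepv ((l.take i).map stepOf)
    rw [map_stepv_map_stepOf _ (fun s hs => hl.1 s (List.mem_of_mem_take hs))] at h
    have := hl.2.1 i
    omega

lemma wpath_pword (l : List ℤ) (hl : IsDyckPath l) : wpath (pword l hl) = l :=
  map_stepv_map_stepOf l hl.1

lemma pword_wpath (w : DyckWord) : pword (wpath w) (wpath_isDyck w) = w :=
  DyckWord.ext (map_stepOf_map_stepv w.toList)

/-- Height of a Dyck word. -/
def hgt (w : DyckWord) : ℕ := pathHeight (wpath w)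

lemma wpath_add (p q : DyckWord) : wpath (p + q) = wpath p ++ wpath q := by
  show (p.toList ++ q.toList).map stepv = _
  rw [List.map_append]
  rfl

lemma wpath_nest (p : DyckWord) : wpath p.nest = 1 :: (wpath p ++ [-1]) := by
  show (([U] ++ p.toList ++ [D]).map stepv) = _
  simp [stepv, wpath]

lemma hgt_add (p q : DyckWord) : hgt (p + q) = max (hgt p) (hgt q) := by
  rw [hgt, wpath_add, pathHeight_append _ _ (wpath_isDyck p).2.2]
  rfl

lemma hgt_nest (p : DyckWord) : hgt p.nest = hgt p + 1 := by
  rw [hgt, wpath_nest, pathHeight_one_cons _ (wpath_isDyck p).2.1 (wpath_isDyck p).2.2]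
  rfl

lemma hgt_zero : hgt 0 = 0 := rfl

lemma hgt_eq_zero_iff (w : DyckWord) : hgt w = 0 ↔ w = 0 := by
  constructor
  · intro h
    have := pathHeight_eq_zero _ (wpath_isDyck w) h
    have h2 : w.toList = [] := by
      have := congrArg List.length this
      simpa [wpath] using this
    exact DyckWord.toList_eq_nil.mp h2
  · rintro rfl; rfl

lemma semilength_eq_zero_iff (w : DyckWord) : w.semilength = 0 ↔ w = 0 := by
  constructor
  · intro h
    have h2 : w.toList.length = 0 := by rw [← DyckWord.two_mul_semilength_eq_length, h]
    exact DyckWord.toList_eq_nil.mp (List.length_eq_zero_iff.mp h2)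
  · rintro rfl; rfl

lemma hgt_le_semilength (w : DyckWord) : hgt w ≤ w.semilength := by
  have := two_mul_pathHeight_le (wpath w) (wpath_isDyck w)
  rw [length_wpath] at this
  unfold hgt
  omega

end DyckAux

namespace DyckAux

lemma finite_cond (j : ℕ) (Q : DyckWord → Prop) :
    Finite {w : DyckWord // w.semilength = j ∧ Q w} := by
  apply Finite.of_injective (fun a => (⟨a.1, a.2.1⟩ : {w : DyckWord // w.semilength = j}))
  intro a b h
  simp only [Subtype.mk.injEq] at h
  exact Subtype.ext h

instance (j x : ℕ) : Finite {w : DyckWord // w.semilength = j ∧ hgt w ≤ x} := finite_cond _ _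
instance (j x : ℕ) : Finite {w : DyckWord // w.semilength = j ∧ hgt w = x} := finite_cond _ _

/-- Number of Dyck words of semilength `j` and height exactly `x`. -/
noncomputable def dW (x j : ℕ) : ℕ := Nat.card {w : DyckWord // w.semilength = j ∧ hgt w = x}

/-- Number of Dyck words of semilength `j` and height at most `x`. -/
noncomputable def cW (x j : ℕ) : ℕ := Nat.card {w : DyckWord // w.semilength = j ∧ hgt w ≤ x}

lemma nat_card_sigma {ι : Type*} [Fintype ι] (f : ι → Type*) [∀ i, Finite (f i)] :
    Nat.card (Σ i, f i) = ∑ i, Nat.card (f i) := by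
  classical
  haveI := fun i => Fintype.ofFinite (f i)
  simp [Nat.card_eq_fintype_card]

lemma cW_sl_zero (x : ℕ) : cW x 0 = 1 := by
  rw [cW, Nat.card_eq_one_iff_unique]
  constructor
  · constructor
    rintro ⟨w, hw, -⟩ ⟨w', hw', -⟩
    apply Subtype.ext
    show w = w'
    rw [(semilength_eq_zero_iff w).mp hw, (semilength_eq_zero_iff w').mp hw']
  · exact ⟨⟨0, by simp [hgt_zero]⟩⟩

lemma cW_hgt_zero (j : ℕ) (hj : j ≠ 0) : cW 0 j = 0 := by
  rw [cW, Nat.card_eq_zero]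
  left
  constructor
  rintro ⟨w, hw, hh⟩
  have h0 : hgt w = 0 := Nat.le_zero.mp hh
  rw [(hgt_eq_zero_iff w).mp h0] at hw
  simp at hw
  omega

lemma dW_hgt_zero (j : ℕ) : dW 0 j = if j = 0 then 1 else 0 := by
  split
  · next h =>
      subst h
      rw [dW, Nat.card_eq_one_iff_unique]
      constructor
      · constructor
        rintro ⟨w, hw, -⟩ ⟨w', hw', -⟩
        apply Subtype.ext
        show w = w'
        rw [(semilength_eq_zero_iff w).mp hw, (semilength_eq_zero_iff w').mp hw']
      · exact ⟨⟨0, by simp [hgt_zero]⟩⟩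
  · next h =>
      rw [dW, Nat.card_eq_zero]
      left
      constructor
      rintro ⟨w, hw, hh⟩
      rw [(hgt_eq_zero_iff w).mp hh] at hw
      simp at hw
      omega

lemma cW_succ_eq (x j : ℕ) : cW (x + 1) j = cW x j + dW (x + 1) j := by
  classical
  have key : Nat.card ({w : DyckWord // w.semilength = j ∧ hgt w ≤ x} ⊕
      {w : DyckWord // w.semilength = j ∧ hgt w = x + 1}) =
      Nat.card {w : DyckWord // w.semilength = j ∧ hgt w ≤ x + 1} := by
    apply Nat.card_eq_of_bijective
      (Sum.elim (fun a => ⟨a.1, a.2.1, by omega⟩) (fun a => ⟨a.1, a.2.1, by omega⟩))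
    constructor
    · rintro (a | a) (b | b) h <;>
        simp only [Sum.elim_inl, Sum.elim_inr, Subtype.mk.injEq] at h
      · exact congrArg Sum.inl (Subtype.ext h)
      · exfalso; have h1 := a.2.2; have h2 := b.2.2; rw [h] at h1; omega
      · exfalso; have h1 := a.2.2; have h2 := b.2.2; rw [h] at h1; omega
      · exact congrArg Sum.inr (Subtype.ext h)
    · rintro ⟨w, hw, hh⟩
      by_cases hc : hgt w ≤ x
      · exact ⟨Sum.inl ⟨w, hw, hc⟩, rfl⟩
      · exact ⟨Sum.inr ⟨w, hw, by omega⟩, rfl⟩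
  rw [Nat.card_sum] at key
  rw [cW, cW, dW, ← key]

lemma cW_rec (x j : ℕ) : cW (x + 1) (j + 1) =
    ∑ i ∈ Finset.range (j + 1), cW x i * cW (x + 1) (j - i) := by
  classical
  have key : Nat.card (Σ i : Fin (j + 1),
      ({q : DyckWord // q.semilength = (i : ℕ) ∧ hgt q ≤ x} ×
       {r : DyckWord // r.semilength = j - (i : ℕ) ∧ hgt r ≤ x + 1})) =
      Nat.card {w : DyckWord // w.semilength = j + 1 ∧ hgt w ≤ x + 1} := by
    apply Nat.card_eq_of_bijective
      (fun y => ⟨y.2.1.1.nest + y.2.2.1, by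
        obtain ⟨⟨i, hi⟩, ⟨q, hq1, hq2⟩, ⟨r, hr1, hr2⟩⟩ := y
        refine ⟨?_, ?_⟩
        · show (q.nest + r).semilength = j + 1
          rw [DyckWord.semilength_add, DyckWord.semilength_nest]
          omega
        · show hgt (q.nest + r) ≤ x + 1
          rw [hgt_add, hgt_nest]
          omega⟩)
    constructor
    · rintro ⟨⟨i, hi⟩, ⟨q, hq1, hq2⟩, ⟨r, hr1, hr2⟩⟩ ⟨⟨i', hi'⟩, ⟨q', hq1', hq2'⟩, ⟨r', hr1', hr2'⟩⟩ h
      simp only [Subtype.mk.injEq] at h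
      have hq : q = q' := by
        have := congrArg DyckWord.insidePart h
        rwa [DyckWord.insidePart_add q.nest_ne_zero, DyckWord.insidePart_nest,
          DyckWord.insidePart_add q'.nest_ne_zero, DyckWord.insidePart_nest] at this
      have hr : r = r' := by
        have := congrArg DyckWord.outsidePart h
        rwa [DyckWord.outsidePart_add q.nest_ne_zero, DyckWord.outsidePart_nest,
          DyckWord.outsidePart_add q'.nest_ne_zero, DyckWord.outsidePart_nest,
          zero_add, zero_add] at this
      have hii : i = i' := by
        have h3 := congrArg DyckWord.semilength hq
        have e1 : q.semilength = i := hq1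
        have e2 : q'.semilength = i' := hq1'
        omega
      subst hq; subst hr; subst hii
      rfl
    · rintro ⟨w, hsl, hh⟩
      have hne : w ≠ 0 := by
        intro h0
        rw [h0] at hsl
        simp at hsl
      have hdec := DyckWord.nest_insidePart_add_outsidePart hne
      have hslo := DyckWord.semilength_insidePart_add_semilength_outsidePart_add_one hne
      have hhh : max (hgt w.insidePart + 1) (hgt w.outsidePart) ≤ x + 1 := by
        have h2 : hgt (w.insidePart.nest + w.outsidePart) = hgt w := congrArg hgt hdec
        rw [hgt_add, hgt_nest] at h2
        omega
      refine ⟨⟨⟨w.insidePart.semilength, by omega⟩,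
        ⟨w.insidePart, rfl, by omega⟩,
        ⟨w.outsidePart, by
          show w.outsidePart.semilength = j - w.insidePart.semilength
          omega, by omega⟩⟩, ?_⟩
      exact Subtype.ext hdec
  rw [cW, ← key, nat_card_sigma]
  rw [← Fin.sum_univ_eq_sum_range (fun i => cW x i * cW (x + 1) (j - i))]
  congr 1
  funext i
  rw [Nat.card_prod]
  rfl

end DyckAux

namespace DyckAux
open PowerSeries

noncomputable def pol : ℕ → ℚ⟦X⟧
  | 0 => 1
  | 1 => 1
  | (x+2) => pol (x+1) - X * pol x

lemma pol_succ_succ (x : ℕ) : pol (x + 2) = pol (x + 1) - X * pol x := rfl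

lemma constantCoeff_pol (x : ℕ) : constantCoeff (pol x) = 1 := by
  induction x using Nat.twoStepInduction with
  | zero => simp [pol]
  | one => simp [pol]
  | more x ih1 ih2 =>
      rw [pol_succ_succ, map_sub, map_mul, constantCoeff_X, ih1]
      simp [ih2]

lemma pol_ne_zero (x : ℕ) : pol x ≠ 0 := by
  intro h
  have := constantCoeff_pol x
  rw [h, map_zero] at this
  exact one_ne_zero this.symm

noncomputable def Cg (x : ℕ) : ℚ⟦X⟧ := PowerSeries.mk fun j => (cW x j : ℚ)
noncomputable def Fg (x : ℕ) : ℚ⟦X⟧ := PowerSeries.mk fun j => (dW x j : ℚ)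

lemma Cg_zero : Cg 0 = 1 := by
  ext n
  rw [Cg, coeff_mk, coeff_one]
  rcases n with - | n
  · simp [cW_sl_zero]
  · simp [cW_hgt_zero (n + 1) (by omega)]

lemma Cg_eq (x : ℕ) : Cg (x + 1) = 1 + X * (Cg x * Cg (x + 1)) := by
  ext n
  rw [map_add, coeff_one]
  rcases n with - | j
  · have h0 : (coeff 0) (X * (Cg x * Cg (x + 1))) = 0 := by
      rw [coeff_zero_eq_constantCoeff, map_mul, constantCoeff_X, zero_mul]
    rw [h0, Cg, coeff_mk, cW_sl_zero]
    simp
  · rw [coeff_succ_X_mul, coeff_mul, Cg, Cg, coeff_mk, if_neg (by omega), zero_add,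
      Finset.Nat.sum_antidiagonal_eq_sum_range_succ_mk, cW_rec]
    push_cast
    apply Finset.sum_congr rfl
    intro i hi
    rw [coeff_mk, coeff_mk]

lemma Cg_mul_pol (x : ℕ) : Cg x * pol (x + 1) = pol x := by
  induction x with
  | zero => rw [Cg_zero]; simp [pol]
  | succ x ih =>
      have h := Cg_eq x
      rw [pol_succ_succ]
      linear_combination (pol (x + 1)) * h + X * Cg (x + 1) * ih

lemma pol_sq (x : ℕ) : pol (x + 1) * pol (x + 1) = pol x * pol (x + 2) + X ^ (x + 1) := by
  induction x with
  | zero =>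
      rw [pol_succ_succ]
      show (1 : ℚ⟦X⟧) * 1 = 1 * ((1 : ℚ⟦X⟧) - X * 1) + X ^ 1
      ring
  | succ x ih =>
      show pol (x + 2) * pol (x + 2) = pol (x + 1) * pol (x + 3) + X ^ (x + 2)
      have h2 : pol (x + 2) = pol (x + 1) - X * pol x := pol_succ_succ x
      have h3 : pol (x + 3) = pol (x + 2) - X * pol (x + 1) := pol_succ_succ (x + 1)
      linear_combination X * ih + pol (x + 2) * h2 - pol (x + 1) * h3

lemma Fg_zero : Fg 0 = 1 := by
  ext n
  rw [Fg, coeff_mk, coeff_one, dW_hgt_zero]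
  split <;> simp

lemma Fg_succ (x : ℕ) : Fg (x + 1) = Cg (x + 1) - Cg x := by
  ext n
  rw [map_sub, Fg, Cg, Cg, coeff_mk, coeff_mk, coeff_mk]
  have := cW_succ_eq x n
  push_cast [this]
  ring

lemma Fg_mul_pol (x : ℕ) : Fg x * (pol x * pol (x + 1)) = X ^ x := by
  rcases x with - | x
  · rw [Fg_zero]
    show (1 : ℚ⟦X⟧) * ((1 : ℚ⟦X⟧) * 1) = X ^ 0
    simp
  · have h1 := Cg_mul_pol (x + 1)
    have h2 := Cg_mul_pol x
    have h3 := pol_sq x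
    have hF := Fg_succ x
    linear_combination (pol (x + 1)) * h1 - (pol (x + 2)) * h2 + h3 +
      (pol (x + 1) * pol (x + 2)) * hF

/-- Combinatorial fact: no Dyck word has height exceeding its semilength. -/
lemma dW_eq_zero {x j : ℕ} (h : j < x) : dW x j = 0 := by
  rw [dW, Nat.card_eq_zero]
  left
  constructor
  rintro ⟨w, hw, hh⟩
  have := hgt_le_semilength w
  omega

lemma coeff_Fg (x j : ℕ) : (coeff j) (Fg x) = (dW x j : ℚ) := coeff_mk _ _

lemma coeff_mul_eq_zero {f g : ℚ⟦X⟧} {n : ℕ} (hf : ∀ i ≤ n, coeff i f = 0) :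
    coeff n (f * g) = 0 := by
  rw [coeff_mul]
  apply Finset.sum_eq_zero
  intro p hp
  have := Finset.HasAntidiagonal.mem_antidiagonal.mp hp
  rw [hf p.1 (by omega), zero_mul]

/-- The telescoping identity. -/
lemma telescope {R : Type*} [CommRing R] (A B : R) (m : ℕ) (hm : 1 ≤ m) (hme : Even m) :
    (A + B) * ∑ k ∈ Finset.Icc 1 m, (-1 : R) ^ (k + 1) * (A ^ k * B ^ (m - k)) =
      A * B ^ m - A ^ (m + 1) := by
  set u : ℕ → R := fun i => (-1 : R) ^ (i + 1) * (A ^ i * B ^ (m + 1 - i)) with hu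
  have step : ∀ k ∈ Finset.Icc 1 m,
      (A + B) * ((-1 : R) ^ (k + 1) * (A ^ k * B ^ (m - k))) = u k - u (k + 1) := by
    intro k hk
    rw [Finset.mem_Icc] at hk
    have h1 : m + 1 - k = (m - k) + 1 := by omega
    have h2 : m + 1 - (k + 1) = m - k := by omega
    rw [hu]
    simp only []
    rw [h1, h2, pow_succ (-1 : R) (k + 1), pow_succ B (m - k), pow_succ A k]
    ring
  rw [Finset.mul_sum, Finset.sum_congr rfl step,
    show Finset.Icc 1 m = Finset.Ico 1 (m + 1) from (Finset.Ico_add_one_right_eq_Icc 1 m).symm,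
    Finset.sum_Ico_eq_sum_range]
  have h3 : m + 1 - 1 = m := by omega
  rw [h3]
  have h4 : ∀ i, u (1 + i) = u (i + 1) := fun i => by rw [Nat.add_comm]
  have h5 : ∀ i, u (1 + i + 1) = u (i + 1 + 1) := fun i => by rw [Nat.add_comm 1 i]
  calc ∑ i ∈ Finset.range m, (u (1 + i) - u (1 + i + 1))
      = ∑ i ∈ Finset.range m, ((fun j => u (j + 1)) i - (fun j => u (j + 1)) (i + 1)) := by
        apply Finset.sum_congr rfl
        intro i _
        rw [h4, h5]
    _ = u (0 + 1) - u (m + 1) := Finset.sum_range_sub' (fun j => u (j + 1)) m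
    _ = A * B ^ m - A ^ (m + 1) := by
        rw [hu]
        simp only [Nat.zero_add]
        have e1 : m + 1 - 1 = m := by omega
        have e2 : m + 1 - (m + 1) = 0 := by omega
        have e3 : Even (m + 1 + 1) := by
          rcases hme with ⟨r, hr⟩
          exact ⟨r + 1, by omega⟩
        rw [e1, e2, e3.neg_one_pow, pow_one]
        have e4 : (-1 : R) ^ (0 + 1 + 1) = 1 := by norm_num
        rw [e4]
        ring

end DyckAux

namespace DyckAux
open PowerSeries

noncomputable def gg (m x : ℕ) : ℚ⟦X⟧ := Fg x ^ m * pol (x + 1) * (pol x)⁻¹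

noncomputable def phi : ℚ⟦X⟧ →+* LaurentSeries ℚ := HahnSeries.ofPowerSeries ℤ ℚ

lemma phi_inj : Function.Injective phi := HahnSeries.ofPowerSeries_injective

lemma phiP_ne (x : ℕ) : phi (pol x) ≠ 0 :=
  fun h => pol_ne_zero x (phi_inj (by rw [h, map_zero]))

lemma phiX_ne : phi (X : ℚ⟦X⟧) ≠ 0 :=
  fun h => X_ne_zero (phi_inj (by rw [h, map_zero]))

lemma phi_r1 (x : ℕ) : phi (Fg x) * (phi (pol x) * phi (pol (x + 1))) = phi (X : ℚ⟦X⟧) ^ x := by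
  rw [← map_mul, ← map_mul, Fg_mul_pol, map_pow]

lemma phi_hAB (x : ℕ) :
    (phi (Fg x) + phi (Fg (x + 1))) * (phi (pol x) * phi (pol (x + 2)))
      = phi (X : ℚ⟦X⟧) ^ x := by
  apply mul_right_cancel₀ (phiP_ne (x + 1))
  have r1 := phi_r1 x
  have r2 := phi_r1 (x + 1)
  have r4 : phi (pol (x + 2)) = phi (pol (x + 1)) - phi (X : ℚ⟦X⟧) * phi (pol x) := by
    rw [← map_mul, ← map_sub]
    exact congrArg phi (pol_succ_succ x)
  linear_combination (phi (pol (x + 2))) * r1 + (phi (pol x)) * r2 +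
    (phi (X : ℚ⟦X⟧) ^ x) * r4

lemma phi_hABne (x : ℕ) : phi (Fg x) + phi (Fg (x + 1)) ≠ 0 := by
  intro h
  have := phi_hAB x
  rw [h, zero_mul] at this
  exact pow_ne_zero x phiX_ne this.symm

lemma Ikey (m x : ℕ) (hm : 1 ≤ m) (hme : Even m) :
    (∑ k ∈ Finset.Icc 1 m, (-1 : ℚ⟦X⟧) ^ (k + 1) * (Fg x ^ k * Fg (x + 1) ^ (m - k))) *
        (pol x * pol (x + 1)) =
      X * Fg x ^ (m + 1) * (pol x * pol (x + 1)) + Fg (x + 1) ^ m * (pol (x + 2) * pol x) -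
        Fg x ^ m * (pol (x + 1) * pol (x + 1)) := by
  apply phi_inj
  simp only [map_mul, map_add, map_sub, map_sum, map_pow, map_neg, map_one]
  apply mul_left_cancel₀ (phi_hABne x)
  rw [← mul_assoc, telescope (phi (Fg x)) (phi (Fg (x + 1))) m hm hme]
  have r1 := phi_r1 x
  have hab := phi_hAB x
  have r3 : phi (pol (x + 1)) * phi (pol (x + 1)) =
      phi (pol x) * phi (pol (x + 2)) + phi (X : ℚ⟦X⟧) ^ (x + 1) := by
    rw [← map_mul, ← map_mul, ← map_pow, ← map_add]
    exact congrArg phi (pol_sq x)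
  set A := phi (Fg x)
  set B := phi (Fg (x + 1))
  set t := phi (X : ℚ⟦X⟧)
  linear_combination (A ^ m * (A + B)) * r3 - (B ^ m - A ^ m) * hab +
    (B ^ m - A ^ m - t * A ^ m * (A + B)) * r1

lemma pol_inv_mul (x : ℕ) : (pol x)⁻¹ * pol x = 1 :=
  PowerSeries.inv_mul_cancel _ (by rw [constantCoeff_pol]; exact one_ne_zero)

lemma I2 (m x : ℕ) (hm : 1 ≤ m) (hme : Even m) :
    ∑ k ∈ Finset.Icc 1 m, (-1 : ℚ⟦X⟧) ^ (k + 1) * (Fg x ^ k * Fg (x + 1) ^ (m - k)) =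
      X * Fg x ^ (m + 1) + gg m (x + 1) - gg m x := by
  have hne : pol x * pol (x + 1) ≠ 0 := mul_ne_zero (pol_ne_zero x) (pol_ne_zero (x + 1))
  apply mul_right_cancel₀ hne
  rw [Ikey m x hm hme, gg, gg]
  have hi := pol_inv_mul x
  have hi1 := pol_inv_mul (x + 1)
  linear_combination (-(Fg (x + 1) ^ m * pol (x + 2) * pol x)) * hi1 +
    (Fg x ^ m * pol (x + 1) * pol (x + 1)) * hi

lemma gg_zero (m : ℕ) : gg m 0 = 1 := by
  rw [gg, Fg_zero, one_pow, show pol 1 = 1 from rfl, show pol 0 = 1 from rfl, one_mul]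
  have := pol_inv_mul 0
  rw [show pol 0 = 1 from rfl] at this
  simpa using this

lemma sum_I2 (m n : ℕ) (hm : 1 ≤ m) (hme : Even m) :
    ∑ x ∈ Finset.range (n + 1),
        ∑ k ∈ Finset.Icc 1 m, (-1 : ℚ⟦X⟧) ^ (k + 1) * (Fg x ^ k * Fg (x + 1) ^ (m - k)) =
      X * ∑ x ∈ Finset.range (n + 1), Fg x ^ (m + 1) + gg m (n + 1) - gg m 0 := by
  calc ∑ x ∈ Finset.range (n + 1),
      ∑ k ∈ Finset.Icc 1 m, (-1 : ℚ⟦X⟧) ^ (k + 1) * (Fg x ^ k * Fg (x + 1) ^ (m - k))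
      = ∑ x ∈ Finset.range (n + 1), (X * Fg x ^ (m + 1) + (gg m (x + 1) - gg m x)) := by
        apply Finset.sum_congr rfl
        intro x _
        rw [I2 m x hm hme]
        ring
    _ = ∑ x ∈ Finset.range (n + 1), X * Fg x ^ (m + 1) +
        ∑ x ∈ Finset.range (n + 1), (gg m (x + 1) - gg m x) := Finset.sum_add_distrib
    _ = X * ∑ x ∈ Finset.range (n + 1), Fg x ^ (m + 1) + (gg m (n + 1) - gg m 0) := by
        rw [Finset.mul_sum, Finset.sum_range_sub]
    _ = X * ∑ x ∈ Finset.range (n + 1), Fg x ^ (m + 1) + gg m (n + 1) - gg m 0 := by ring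

lemma coeff_gg_eq_zero (m n : ℕ) (hm : 1 ≤ m) : (coeff n) (gg m (n + 1)) = 0 := by
  rw [gg, show m = (m - 1) + 1 by omega, pow_succ']
  rw [mul_assoc, mul_assoc]
  apply coeff_mul_eq_zero
  intro i hi
  rw [coeff_Fg]
  rw [dW_eq_zero (by omega)]
  simp

lemma coeff_FgPow_eq_zero (m n : ℕ) (hn : n.succ = n + 1) :
    (coeff (n - 1)) (Fg n ^ (m + 1)) = 0 ∨ n = 0 := by
  rcases Nat.eq_zero_or_pos n with h | h
  · right; exact h
  · left
    rw [pow_succ']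
    apply coeff_mul_eq_zero
    intro i hi
    rw [coeff_Fg, dW_eq_zero (by omega)]
    simp

lemma main_coeff (m n : ℕ) (hm : 1 ≤ m) (hme : Even m) (hn : 1 ≤ n) :
    (coeff n) (∑ x ∈ Finset.range (n + 1),
        ∑ k ∈ Finset.Icc 1 m, (-1 : ℚ⟦X⟧) ^ (k + 1) * (Fg x ^ k * Fg (x + 1) ^ (m - k))) =
      (coeff (n - 1)) (∑ x ∈ Finset.range n, Fg x ^ (m + 1)) := by
  rw [sum_I2 m n hm hme, gg_zero, map_sub, map_add]
  rw [coeff_gg_eq_zero m n hm, coeff_one, if_neg (by omega)]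
  obtain ⟨n', rfl⟩ : ∃ n', n = n' + 1 := ⟨n - 1, by omega⟩
  rw [coeff_succ_X_mul]
  have hlast : (coeff n') (Fg (n' + 1) ^ (m + 1)) = 0 := by
    rw [pow_succ']
    apply coeff_mul_eq_zero
    intro i hi
    rw [coeff_Fg, dW_eq_zero (by omega)]
    simp
  rw [Finset.sum_range_succ, map_add, hlast]
  simp

end DyckAux

namespace DyckAux
open PowerSeries

lemma card_dyckList (x j : ℕ) :
    Nat.card {l : List ℤ // IsDyckPath l ∧ l.length = 2 * j ∧ pathHeight l = x} = dW x j := by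
  rw [dW]
  apply Nat.card_eq_of_bijective (fun a => ⟨pword a.1 a.2.1, by
    have hl := a.2.2.1
    have h1 : 2 * (pword a.1 a.2.1).semilength = a.1.length := by
      rw [← length_wpath, wpath_pword]
    constructor
    · omega
    · show pathHeight (wpath (pword a.1 a.2.1)) = x
      rw [wpath_pword]
      exact a.2.2.2⟩)
  constructor
  · intro a b h
    simp only [Subtype.mk.injEq] at h
    have h2 := congrArg wpath h
    rw [wpath_pword, wpath_pword] at h2
    exact Subtype.ext h2
  · rintro ⟨w, hsl, hh⟩
    refine ⟨⟨wpath w, wpath_isDyck w, by rw [length_wpath]; omega, hh⟩, ?_⟩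
    exact Subtype.ext (pword_wpath w)

instance : Finite DyckStep := by
  apply Finite.of_injective (fun s => decide (s = DyckStep.U))
  intro a b h
  cases a <;> cases b <;> simp_all

lemma finite_dyck_le (L : ℕ) : Finite {l : List ℤ // IsDyckPath l ∧ l.length ≤ L} := by
  have hfin : {s : List DyckStep | s.length ≤ L}.Finite := List.finite_length_le _ _
  haveI := hfin.to_subtype
  apply Finite.of_injective (fun a => (⟨a.1.map stepOf, by
    simpa using a.2.2⟩ : {s : List DyckStep | s.length ≤ L}))
  intro a b h
  simp only [Subtype.mk.injEq] at h
  have h2 := congrArg (List.map stepv) h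
  rw [map_stepv_map_stepOf _ a.2.1.1, map_stepv_map_stepOf _ b.2.1.1] at h2
  exact Subtype.ext h2

lemma finite_tupleSet (n M : ℕ) (R : (Fin M → List ℤ) → Prop) :
    Finite {p : Fin M → List ℤ // (∀ i, IsDyckPath (p i)) ∧
      (∑ i, ((p i).length : ℤ)) = 2 * (n : ℤ) ∧ R p} := by
  haveI := finite_dyck_le (2 * n)
  apply Finite.of_injective (fun a => (fun i => (⟨a.1 i, a.2.1 i, by
      have hs := a.2.2.1
      have h1 : ((a.1 i).length : ℤ) ≤ ∑ j, ((a.1 j).length : ℤ) :=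
        Finset.single_le_sum (f := fun j => ((a.1 j).length : ℤ))
          (fun j _ => by positivity) (Finset.mem_univ i)
      have hle : ((a.1 i).length : ℤ) ≤ 2 * (n : ℤ) := h1.trans (le_of_eq hs)
      exact_mod_cast hle⟩ : {l : List ℤ // IsDyckPath l ∧ l.length ≤ 2 * n})))
  intro a b h
  apply Subtype.ext
  funext i
  exact congrArg Subtype.val (congrFun h i)

instance (n : ℕ) (a : List ℕ) : Finite {p : Fin a.length → List ℤ //
    (∀ i, IsDyckPath (p i)) ∧ (∑ i, ((p i).length : ℤ)) = 2 * (n : ℤ) ∧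
    ∀ i, pathHeight (p i) = a.get i} := finite_tupleSet n a.length _

instance (x j : ℕ) : Finite {l : List ℤ // IsDyckPath l ∧ l.length = 2 * j ∧ pathHeight l = x} := by
  haveI := finite_dyck_le (2 * j)
  apply Finite.of_injective (fun a =>
    (⟨a.1, a.2.1, le_of_eq a.2.2.1⟩ : {l : List ℤ // IsDyckPath l ∧ l.length ≤ 2 * j}))
  intro a b h
  simp only [Subtype.mk.injEq] at h
  exact Subtype.ext h

noncomputable def NP (n : ℕ) (a : List ℕ) : ℕ := Nat.card {p : Fin a.length → List ℤ //
    (∀ i, IsDyckPath (p i)) ∧ (∑ i, ((p i).length : ℤ)) = 2 * (n : ℤ) ∧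
    ∀ i, pathHeight (p i) = a.get i}

lemma NP_nil (n : ℕ) : NP n [] = if n = 0 then 1 else 0 := by
  rw [NP]
  split
  · next h =>
      subst h
      rw [Nat.card_eq_one_iff_unique]
      constructor
      · constructor
        intro p q
        apply Subtype.ext
        funext i
        exact i.elim0
      · exact ⟨⟨fun i => i.elim0, fun i => i.elim0, by simp, fun i => i.elim0⟩⟩
  · next h =>
      rw [Nat.card_eq_zero]
      left
      constructor
      rintro ⟨p, -, hsum, -⟩
      simp at hsum
      omega

lemma NP_cons (n b : ℕ) (as : List ℕ) :
    NP n (b :: as) = ∑ j ∈ Finset.range (n + 1), dW b j * NP (n - j) as := by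
  classical
  have key : Nat.card (Σ j : Fin (n + 1),
      ({l : List ℤ // IsDyckPath l ∧ l.length = 2 * (j : ℕ) ∧ pathHeight l = b} ×
       {p : Fin as.length → List ℤ // (∀ i, IsDyckPath (p i)) ∧
         (∑ i, ((p i).length : ℤ)) = 2 * ((n - (j : ℕ) : ℕ) : ℤ) ∧
         ∀ i, pathHeight (p i) = as.get i})) =
      Nat.card {p : Fin (as.length + 1) → List ℤ // (∀ i, IsDyckPath (p i)) ∧
        (∑ i, ((p i).length : ℤ)) = 2 * (n : ℤ) ∧
        ∀ i, pathHeight (p i) = (b :: as).get i} := by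
    apply Nat.card_eq_of_bijective (fun y => ⟨Fin.cons y.2.1.1 y.2.2.1, by
      obtain ⟨⟨j, hj⟩, ⟨l, hl1, hl2, hl3⟩, ⟨q, hq1, hq2, hq3⟩⟩ := y
      have hjn : j ≤ n := by omega
      refine ⟨?_, ?_, ?_⟩
      · intro i
        refine Fin.cases ?_ ?_ i
        · rw [Fin.cons_zero]; exact hl1
        · intro i'; rw [Fin.cons_succ]; exact hq1 i'
      · show ∑ i : Fin (as.length + 1), (((Fin.cons l q : Fin (as.length + 1) → List ℤ) i).length : ℤ)
            = 2 * (n : ℤ)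
        rw [Fin.sum_univ_succ]
        simp only [Fin.cons_zero, Fin.cons_succ]
        rw [hl2, hq2]
        push_cast [Nat.cast_sub hjn]
        ring
      · intro i
        refine Fin.cases ?_ ?_ i
        · rw [Fin.cons_zero]; exact hl3
        · intro i'; rw [Fin.cons_succ]; exact hq3 i'⟩)
    constructor
    · rintro ⟨⟨j, hj⟩, ⟨l, hl1, hl2, hl3⟩, ⟨q, hq1, hq2, hq3⟩⟩
        ⟨⟨j', hj'⟩, ⟨l', hl1', hl2', hl3'⟩, ⟨q', hq1', hq2', hq3'⟩⟩ h
      simp only [Subtype.mk.injEq] at h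
      have h0 : l = l' := by
        have := congrFun h 0
        simpa using this
      have hqq : q = q' := by
        funext i
        have := congrFun h i.succ
        simpa using this
      have hjj : j = j' := by
        rw [h0] at hl2
        have e1 : l'.length = 2 * j := hl2
        have e2 : l'.length = 2 * j' := hl2'
        omega
      subst h0; subst hqq; subst hjj
      rfl
    · rintro ⟨p, h1, h2, h3⟩
      have hj0 : (p 0).length = 2 * (pword (p 0) (h1 0)).semilength := by
        rw [← length_wpath, wpath_pword]
      set j0 := (pword (p 0) (h1 0)).semilength with hj0def
      have h2' : ((p 0).length : ℤ) +
          ∑ i : Fin as.length, ((p (Fin.succ i)).length : ℤ) = 2 * (n : ℤ) := by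
        rw [← Fin.sum_univ_succ (fun i => ((p i).length : ℤ))]
        exact h2
      have hnn : ∀ i : Fin as.length, (0 : ℤ) ≤ ((p (Fin.succ i)).length : ℤ) :=
        fun i => by positivity
      have hsumnn : (0 : ℤ) ≤ ∑ i : Fin as.length, ((p (Fin.succ i)).length : ℤ) :=
        Finset.sum_nonneg fun i _ => hnn i
      have hj0n : j0 ≤ n := by omega
      have hsum2 : ∑ i : Fin as.length, ((p (Fin.succ i)).length : ℤ)
          = 2 * ((n - j0 : ℕ) : ℤ) := by
        rw [Nat.cast_sub hj0n]
        omega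
      refine ⟨⟨⟨j0, by omega⟩, ⟨p 0, h1 0, hj0, h3 0⟩,
        ⟨fun i => p i.succ, fun i => h1 i.succ, hsum2, fun i => h3 i.succ⟩⟩, ?_⟩
      exact Subtype.ext (Fin.cons_self_tail p)
  have key2 : NP n (b :: as) = Nat.card (Σ j : Fin (n + 1),
      ({l : List ℤ // IsDyckPath l ∧ l.length = 2 * (j : ℕ) ∧ pathHeight l = b} ×
       {p : Fin as.length → List ℤ // (∀ i, IsDyckPath (p i)) ∧
         (∑ i, ((p i).length : ℤ)) = 2 * ((n - (j : ℕ) : ℕ) : ℤ) ∧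
         ∀ i, pathHeight (p i) = as.get i})) := by
    rw [NP]
    exact key.symm
  rw [key2, nat_card_sigma]
  rw [← Fin.sum_univ_eq_sum_range (fun j => dW b j * NP (n - j) as)]
  apply Finset.sum_congr rfl
  intro j _
  rw [Nat.card_prod, card_dyckList]
  rfl

lemma NP_coeff (a : List ℕ) : ∀ n : ℕ, (NP n a : ℚ) = (coeff n) ((a.map Fg).prod) := by
  induction a with
  | nil =>
      intro n
      rw [NP_nil]
      simp only [List.map_nil, List.prod_nil, coeff_one]
      split <;> simp_all
  | cons b as ih =>
      intro n
      rw [NP_cons, List.map_cons, List.prod_cons, coeff_mul,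
        Finset.Nat.sum_antidiagonal_eq_sum_range_succ_mk]
      push_cast
      apply Finset.sum_congr rfl
      intro j hj
      rw [coeff_Fg, ih (n - j)]

end DyckAux

namespace DyckAux
open PowerSeries

lemma coeff_neg_pow (k n : ℕ) (f : ℚ⟦X⟧) :
    (coeff n) ((-1 : ℚ⟦X⟧) ^ k * f) = (-1 : ℚ) ^ k * (coeff n) f := by
  have h : ((-1 : ℚ⟦X⟧)) ^ k = C ((-1) ^ k) := by rw [map_pow, map_neg, map_one]
  rw [h, coeff_C_mul]

lemma Qx_eq (n x k m : ℕ) :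
    Qx (n : ℤ) x [k, m - k] = NP n (List.replicate k x ++ List.replicate (m - k) (x + 1)) := by
  rw [Qx]
  have hl : ([k, m - k].zipIdx.flatMap fun q => List.replicate q.1 (x + q.2)) =
      List.replicate k x ++ List.replicate (m - k) (x + 1) := by
    show List.replicate k (x + 0) ++ (List.replicate (m - k) (x + 1) ++ []) = _
    simp
  rw [hl]
  rfl

lemma Qx_coeff (n x k m : ℕ) :
    ((Qx (n : ℤ) x [k, m - k] : ℕ) : ℚ) = (coeff n) (Fg x ^ k * Fg (x + 1) ^ (m - k)) := by
  rw [Qx_eq, NP_coeff]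
  congr 1
  rw [List.map_append, List.map_replicate, List.map_replicate, List.prod_append,
    List.prod_replicate, List.prod_replicate]

lemma G_sum (m n' : ℕ) :
    G ((((n' + 1 : ℕ)) : ℤ) - 1) (m + 1) 0 =
      ∑ x ∈ Finset.range (n' + 1), NP n' (List.replicate (m + 1) x) := by
  classical
  have key : Nat.card (Σ x : Fin (n' + 1),
      {p : Fin (List.replicate (m + 1) (x : ℕ)).length → List ℤ //
        (∀ i, IsDyckPath (p i)) ∧
        (∑ i, ((p i).length : ℤ)) = 2 * ((n' : ℕ) : ℤ) ∧
        ∀ i, pathHeight (p i) = (List.replicate (m + 1) (x : ℕ)).get i}) =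
      Nat.card {p : Fin (m + 1) → List ℤ //
        (∀ i, IsDyckPath (p i)) ∧
        (∑ i, ((p i).length : ℤ)) = 2 * ((((n' + 1 : ℕ)) : ℤ) - 1) ∧
        ∀ i j, |(pathHeight (p i) : ℤ) - (pathHeight (p j) : ℤ)| ≤ ((0 : ℕ) : ℤ)} := by
    apply Nat.card_eq_of_bijective (fun y =>
      ⟨fun i => y.2.1 (Fin.cast ((List.length_replicate (n := m + 1) (a := (y.1 : ℕ)))).symm i), by
        obtain ⟨⟨x, hx⟩, ⟨q, hq1, hq2, hq3⟩⟩ := y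
        have hlen := (List.length_replicate (n := m + 1) (a := x))
        refine ⟨fun i => hq1 _, ?_, ?_⟩
        · have hs := Fintype.sum_equiv (finCongr hlen)
            (fun i' => ((q i').length : ℤ))
            (fun i => ((q (Fin.cast hlen.symm i)).length : ℤ)) (fun i' => rfl)
          rw [← hs, hq2]
          push_cast
          ring
        · intro i j
          have e1 : pathHeight (q (Fin.cast hlen.symm i)) = x := by
            rw [hq3]
            exact List.getElem_replicate _
          have e2 : pathHeight (q (Fin.cast hlen.symm j)) = x := by
            rw [hq3]
            exact List.getElem_replicate _
          rw [e1, e2]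
          simp⟩)
    constructor
    · rintro ⟨⟨x, hx⟩, ⟨q, hq1, hq2, hq3⟩⟩ ⟨⟨x', hx'⟩, ⟨q', hq1', hq2', hq3'⟩⟩ h
      simp only [Subtype.mk.injEq] at h
      have hxx : x = x' := by
        have h0 := congrFun h (0 : Fin (m + 1))
        have e1 : pathHeight (q (Fin.cast ((List.length_replicate (n := m + 1) (a := x))).symm 0)) = x := by
          rw [hq3]; exact List.getElem_replicate _
        have e2 : pathHeight (q' (Fin.cast ((List.length_replicate (n := m + 1) (a := x'))).symm 0)) = x' := by
          rw [hq3']; exact List.getElem_replicate _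
        rw [← e1, ← e2, h0]
      subst hxx
      have hqq : q = q' := by
        funext i'
        exact congrFun h (finCongr ((List.length_replicate (n := m + 1) (a := x))) i')
      subst hqq
      rfl
    · rintro ⟨p, h1, h2, h3⟩
      have hx : ∀ i, pathHeight (p i) = pathHeight (p 0) := by
        intro i
        have h4 := h3 i 0
        rw [Nat.cast_zero, abs_nonpos_iff, sub_eq_zero] at h4
        exact_mod_cast h4
      set x0 := pathHeight (p 0) with hx0
      have hs2 : (∑ i, ((p i).length : ℤ)) = 2 * ((n' : ℕ) : ℤ) := by
        rw [h2]; push_cast; ring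
      have hbound : ((p 0).length : ℤ) ≤ 2 * ((n' : ℕ) : ℤ) := by
        have h5 : ((p 0).length : ℤ) ≤ ∑ j, ((p j).length : ℤ) :=
          Finset.single_le_sum (f := fun j => ((p j).length : ℤ))
            (fun j _ => by positivity) (Finset.mem_univ 0)
        exact h5.trans (le_of_eq hs2)
      have hhl := two_mul_pathHeight_le (p 0) (h1 0)
      have hx0n : x0 < n' + 1 := by omega
      have hlen := (List.length_replicate (n := m + 1) (a := x0))
      refine ⟨⟨⟨x0, hx0n⟩, ⟨fun i' => p (Fin.cast hlen i'), fun i' => h1 _, ?_, ?_⟩⟩, ?_⟩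
      · have hs := Fintype.sum_equiv (finCongr hlen)
          (fun i' => ((p (Fin.cast hlen i')).length : ℤ))
          (fun i => ((p i).length : ℤ)) (fun i' => rfl)
        rw [hs]
        exact hs2
      · intro i'
        rw [List.get_eq_getElem, List.getElem_replicate]
        exact hx _
      · apply Subtype.ext
        funext i
        rfl
  rw [G]
  have key2 : Nat.card {p : Fin (m + 1) → List ℤ //
      (∀ i, IsDyckPath (p i)) ∧
      (∑ i, ((p i).length : ℤ)) = 2 * ((((n' + 1 : ℕ)) : ℤ) - 1) ∧
      ∀ i j, |(pathHeight (p i) : ℤ) - (pathHeight (p j) : ℤ)| ≤ ((0 : ℕ) : ℤ)} =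
      ∑ x ∈ Finset.range (n' + 1), NP n' (List.replicate (m + 1) x) := by
    rw [← key, nat_card_sigma]
    rw [← Fin.sum_univ_eq_sum_range (fun x => NP n' (List.replicate (m + 1) x))]
    rfl
  exact key2

lemma G_coeff (m n : ℕ) (hn : 1 ≤ n) :
    ((G ((n : ℤ) - 1) (m + 1) 0 : ℕ) : ℚ) =
      (coeff (n - 1)) (∑ x ∈ Finset.range n, Fg x ^ (m + 1)) := by
  obtain ⟨n', rfl⟩ : ∃ n', n = n' + 1 := ⟨n - 1, by omega⟩
  rw [G_sum m n']
  push_cast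
  rw [map_sum]
  apply Finset.sum_congr rfl
  intro x _
  rw [NP_coeff]
  congr 1
  rw [List.map_replicate, List.prod_replicate]

end DyckAux


/-- For every even `m ≥ 2` and every `n ≥ 1`,
`∑_{k=1}^{m} (−1)^{k+1}·Q_n(k, m−k) = G_{n-1}(m+1, 0)`. -/
theorem grouped_alternator (m : ℕ) (hm : 2 ≤ m) (hme : Even m) (n : ℕ) (hn : 1 ≤ n) :
    ∑ k ∈ Finset.Icc 1 m, (-1 : ℤ) ^ (k + 1) * Q (n : ℤ) [k, m - k] =
      G ((n : ℤ) - 1) (m + 1) 0 := by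
  open DyckAux PowerSeries in
  have hm1 : 1 ≤ m := by omega
  have key : ((∑ k ∈ Finset.Icc 1 m, (-1 : ℤ) ^ (k + 1) * Q (n : ℤ) [k, m - k] : ℤ) : ℚ)
      = ((G ((n : ℤ) - 1) (m + 1) 0 : ℕ) : ℚ) := by
    have hQ : ∀ k, ((Q (n : ℤ) [k, m - k] : ℕ) : ℚ) =
        ∑ x ∈ Finset.range (n + 1), (coeff n) (Fg x ^ k * Fg (x + 1) ^ (m - k)) := by
      intro k
      rw [Q, Int.toNat_natCast]
      push_cast
      exact Finset.sum_congr rfl fun x _ => Qx_coeff n x k m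
    push_cast
    calc ∑ k ∈ Finset.Icc 1 m, (-1 : ℚ) ^ (k + 1) * ((Q (n : ℤ) [k, m - k] : ℕ) : ℚ)
        = ∑ k ∈ Finset.Icc 1 m, ∑ x ∈ Finset.range (n + 1),
            (coeff n) ((-1 : ℚ⟦X⟧) ^ (k + 1) * (Fg x ^ k * Fg (x + 1) ^ (m - k))) := by
          apply Finset.sum_congr rfl
          intro k _
          rw [hQ k, Finset.mul_sum]
          exact Finset.sum_congr rfl fun x _ => (coeff_neg_pow (k + 1) n _).symm
      _ = ∑ x ∈ Finset.range (n + 1), ∑ k ∈ Finset.Icc 1 m,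
            (coeff n) ((-1 : ℚ⟦X⟧) ^ (k + 1) * (Fg x ^ k * Fg (x + 1) ^ (m - k))) :=
          Finset.sum_comm
      _ = (coeff n) (∑ x ∈ Finset.range (n + 1), ∑ k ∈ Finset.Icc 1 m,
            (-1 : ℚ⟦X⟧) ^ (k + 1) * (Fg x ^ k * Fg (x + 1) ^ (m - k))) := by
          rw [map_sum]
          exact Finset.sum_congr rfl fun x _ => (map_sum _ _ _).symm
      _ = (coeff (n - 1)) (∑ x ∈ Finset.range n, Fg x ^ (m + 1)) :=
          main_coeff m n hm1 hme hn
      _ = ((G ((n : ℤ) - 1) (m + 1) 0 : ℕ) : ℚ) := (G_coeff m n hn).symm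
  exact_mod_cast key
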